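/- Let U : L^∞(Ω,F) → ℝ satisfy (G-PC) and monotonicity on L^∞(Ω,G) (pointwise g₁ ≤ g₂ implies U(g₁) ≤ U(g₂)). Let Φ̂ : S(G) → ℝ be U-order preserving on the simple G-measurable functions S(G), with x ↦ Φ̂(x·1_Ω) continuous on ℝ. Then Φ̂ extends to a functional on all of L^∞(Ω,G) which satisfies (G-PC) and is U-order preserving on L^∞(Ω,G). -/

import Mathlib

open Filter Topology MeasureTheory

/-- Bounded measurable real-valued functions w.r.t. a σ-algebra `mG`. -/
def BddMeas {Ω : Type*} (mG : MeasurableSpace Ω) (f : Ω → ℝ) : Prop :=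
  Measurable[mG] f ∧ ∃ C : ℝ, ∀ ω, |f ω| ≤ C

/-- The class of irrelevant (null) events in `mG` for the functional `T`. -/
def NullG {Ω : Type*} (mG : MeasurableSpace Ω) (T : (Ω → ℝ) → ℝ) : Set (Set Ω) :=
  {N | MeasurableSet[mG] N ∧ ∀ g₁ g₂ : Ω → ℝ, BddMeas mG g₁ → BddMeas mG g₂ →
    T (g₁ + N.indicator g₂) = T g₁}

/-- (G-Mo): `T` is `G`-monotone. -/
def GMo {Ω : Type*} (mG : MeasurableSpace Ω) (T : (Ω → ℝ) → ℝ) : Prop :=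
  ∀ x y : ℝ, x < y → ∀ g : Ω → ℝ, BddMeas mG g → ∀ A : Set Ω,
    MeasurableSet[mG] A → A ∉ NullG mG T →
    T (A.indicator (fun _ => x) + Aᶜ.indicator g) <
      T (A.indicator (fun _ => y) + Aᶜ.indicator g)

/-- (G-QL): `T` is `G`-quasilinear. -/
def GQL {Ω : Type*} (mG : MeasurableSpace Ω) (T : (Ω → ℝ) → ℝ) : Prop :=
  ∀ g₁ g₂ : Ω → ℝ, BddMeas mG g₁ → BddMeas mG g₂ → ∀ A : Set Ω, MeasurableSet[mG] A →
    (∃ gb : Ω → ℝ, BddMeas mG gb ∧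
      T (A.indicator g₁ + Aᶜ.indicator gb) ≤ T (A.indicator g₂ + Aᶜ.indicator gb)) →
    ∀ g : Ω → ℝ, BddMeas mG g →
      T (A.indicator g₁ + Aᶜ.indicator g) ≤ T (A.indicator g₂ + Aᶜ.indicator g)

/-- (G-PC): `T` is `G`-pointwise continuous. -/
def GPC {Ω : Type*} (mG : MeasurableSpace Ω) (T : (Ω → ℝ) → ℝ) : Prop :=
  ∀ (gn : ℕ → Ω → ℝ) (g : Ω → ℝ), (∀ n, BddMeas mG (gn n)) → BddMeas mG g →
    (∃ C : ℝ, ∀ n ω, |gn n ω| ≤ C) →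
    (∀ ω, Tendsto (fun n => gn n ω) atTop (𝓝 (g ω))) →
    Tendsto (fun n => T (gn n)) atTop (𝓝 (T g))

/-- The sup norm of a bounded function. -/
noncomputable def supNorm {Ω : Type*} (f : Ω → ℝ) : ℝ := ⨆ ω, |f ω|

/-- (G-PS): `T` is `G`-pasting at `f`. -/
def GPS {Ω : Type*} (mG : MeasurableSpace Ω) (T : (Ω → ℝ) → ℝ) (f : Ω → ℝ) : Prop :=
  ∀ A₁ A₂ : Set Ω, MeasurableSet[mG] A₁ → MeasurableSet[mG] A₂ → Disjoint A₁ A₂ →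
    ∀ x₁ x₂ : ℝ, T (A₁.indicator f) = T (A₁.indicator fun _ => x₁) →
      T (A₂.indicator f) = T (A₂.indicator fun _ => x₂) →
      T (A₁.indicator f + A₂.indicator f) =
        T (A₁.indicator (fun _ => x₁) + A₂.indicator fun _ => x₂)

/-- (G-NB): `T` is `G`-norm bounded at `f`. -/
def GNB {Ω : Type*} (mG : MeasurableSpace Ω) (T : (Ω → ℝ) → ℝ) (f : Ω → ℝ) : Prop :=
  ∀ A : Set Ω, MeasurableSet[mG] A →
    T (A.indicator fun _ => -(supNorm f)) ≤ T (A.indicator f) ∧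
    T (A.indicator f) ≤ T (A.indicator fun _ => supNorm f)

/-- Simple (finitely-valued) `mG`-measurable functions. -/
def SimpleG {Ω : Type*} (mG : MeasurableSpace Ω) (g : Ω → ℝ) : Prop :=
  Measurable[mG] g ∧ (Set.range g).Finite

theorem stmt13 {Ω : Type*} (mF mG : MeasurableSpace Ω) (hsub : mG ≤ mF)
    (U : (Ω → ℝ) → ℝ) (hUPC : GPC mG U)
    (hUmono : ∀ g₁ g₂ : Ω → ℝ, BddMeas mG g₁ → BddMeas mG g₂ →
      (∀ ω, g₁ ω ≤ g₂ ω) → U g₁ ≤ U g₂)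
    (Φh : (Ω → ℝ) → ℝ)
    (hop : ∀ g₁ g₂ : Ω → ℝ, SimpleG mG g₁ → SimpleG mG g₂ →
      (Φh g₁ ≤ Φh g₂ ↔ U g₁ ≤ U g₂))
    (hcont : Continuous fun x : ℝ => Φh (fun _ => x)) :
    ∃ Φ : (Ω → ℝ) → ℝ,
      (∀ g : Ω → ℝ, SimpleG mG g → Φ g = Φh g) ∧
      GPC mG Φ ∧
      (∀ g₁ g₂ : Ω → ℝ, BddMeas mG g₁ → BddMeas mG g₂ →
        (Φ g₁ ≤ Φ g₂ ↔ U g₁ ≤ U g₂)) := by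
  classical
  set c : ℝ → ℝ := fun x => U (fun _ => x) with hcdef
  set φ : ℝ → ℝ := fun x => Φh (fun _ => x) with hφdef
  have hconstS : ∀ x : ℝ, SimpleG mG (fun _ : Ω => x) := by
    intro x
    refine ⟨measurable_const, (Set.finite_singleton x).subset ?_⟩
    rintro y ⟨ω, rfl⟩; exact Set.mem_singleton x
  have hconstB : ∀ x : ℝ, BddMeas mG (fun _ : Ω => x) :=
    fun x => ⟨measurable_const, ⟨|x|, fun _ => le_rfl⟩⟩
  have hSB : ∀ g : Ω → ℝ, SimpleG mG g → BddMeas mG g := by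
    rintro g ⟨hm, hfin⟩
    refine ⟨hm, ?_⟩
    obtain ⟨C, hC⟩ := (hfin.image abs).bddAbove
    exact ⟨C, fun ω => hC ⟨g ω, ⟨ω, rfl⟩, rfl⟩⟩
  have hiff : ∀ x y : ℝ, φ x ≤ φ y ↔ c x ≤ c y :=
    fun x y => hop _ _ (hconstS x) (hconstS y)
  have hφeq : ∀ x y : ℝ, c x = c y → φ x = φ y := by
    intro x y h
    exact le_antisymm ((hiff x y).mpr h.le) ((hiff y x).mpr h.ge)
  have hccont : Continuous c := by
    rw [continuous_iff_seqContinuous]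
    intro xn x hx
    have hbA : BddAbove (Set.range xn) := hx.bddAbove_range
    have hbB : BddBelow (Set.range xn) := hx.bddBelow_range
    obtain ⟨A, hA⟩ := hbA
    obtain ⟨B, hB⟩ := hbB
    refine hUPC (fun n _ => xn n) (fun _ => x) (fun n => hconstB _) (hconstB x)
      ⟨max A (-B), fun n ω => abs_le.mpr ⟨?_, ?_⟩⟩ (fun ω => hx)
    · have := hB ⟨n, rfl⟩
      calc -(max A (-B)) ≤ -(-B) := neg_le_neg (le_max_right _ _)
        _ = B := neg_neg B
        _ ≤ xn n := this
    · exact le_trans (hA ⟨n, rfl⟩) (le_max_left _ _)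
  -- existence of a constant with the same U-value, inside a given interval
  have hex : ∀ (g : Ω → ℝ), BddMeas mG g → ∀ M : ℝ, 0 ≤ M → (∀ ω, |g ω| ≤ M) →
      ∃ x ∈ Set.Icc (-M) M, c x = U g := by
    intro g hg M hM hgM
    have h1 : c (-M) ≤ U g := by
      refine hUmono _ _ (hconstB _) hg fun ω => ?_
      have := (abs_le.mp (hgM ω)).1; linarith
    have h2 : U g ≤ c M := by
      refine hUmono _ _ hg (hconstB _) fun ω => (abs_le.mp (hgM ω)).2
    have := intermediate_value_Icc (by linarith : (-M : ℝ) ≤ M) hccont.continuousOn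
    obtain ⟨x, hxmem, hx⟩ := this ⟨h1, h2⟩
    exact ⟨x, hxmem, hx⟩
  -- the extension
  set Φ : (Ω → ℝ) → ℝ :=
    fun g => if h : ∃ x : ℝ, c x = U g then φ (Classical.choose h) else 0 with hΦdef
  have hΦval : ∀ (g : Ω → ℝ) (x : ℝ), c x = U g → Φ g = φ x := by
    intro g x hx
    have h : ∃ y : ℝ, c y = U g := ⟨x, hx⟩
    rw [hΦdef]
    simp only [dif_pos h]
    exact hφeq _ _ (by rw [Classical.choose_spec h, hx])
  have hexB : ∀ g : Ω → ℝ, BddMeas mG g → ∃ x : ℝ, c x = U g := by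
    intro g hg
    obtain ⟨C, hC⟩ := hg.2
    have hC0 : 0 ≤ max C 0 := le_max_right _ _
    obtain ⟨x, _, hx⟩ := hex g hg (max C 0) hC0
      (fun ω => le_trans (hC ω) (le_max_left _ _))
    exact ⟨x, hx⟩
  refine ⟨Φ, ?_, ?_, ?_⟩
  · -- agreement with Φh on simple functions
    intro g hgS
    obtain ⟨x, hx⟩ := hexB g (hSB g hgS)
    rw [hΦval g x hx]
    exact le_antisymm ((hop _ _ (hconstS x) hgS).mpr hx.le)
      ((hop _ _ hgS (hconstS x)).mpr hx.ge)
  · -- (G-PC)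
    intro gn g hgn hg hC hptw
    obtain ⟨C, hCb⟩ := hC
    obtain ⟨Cg, hCg⟩ := hg.2
    set M : ℝ := max (max C Cg) 0 with hMdef
    have hM0 : 0 ≤ M := le_max_right _ _
    have hbn : ∀ n ω, |gn n ω| ≤ M :=
      fun n ω => le_trans (hCb n ω) (le_trans (le_max_left _ _) (le_max_left _ _))
    have hbg : ∀ ω, |g ω| ≤ M :=
      fun ω => le_trans (hCg ω) (le_trans (le_max_right _ _) (le_max_left _ _))
    have hUt : Tendsto (fun n => U (gn n)) atTop (𝓝 (U g)) :=
      hUPC gn g hgn hg ⟨C, hCb⟩ hptw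
    choose yn hynmem hyn using fun n => hex (gn n) (hgn n) M hM0 (hbn n)
    obtain ⟨y, _, hy⟩ := hex g hg M hM0 hbg
    have hΦn : (fun n => Φ (gn n)) = fun n => φ (yn n) :=
      funext fun n => hΦval _ _ (hyn n)
    rw [hΦval g y hy, hΦn]
    apply tendsto_of_subseq_tendsto
    intro ns hns
    obtain ⟨yinf, hyinfmem, ms, hms_mono, hms⟩ :=
      (isCompact_Icc (a := -M) (b := M)).tendsto_subseq
        (x := fun k => yn (ns k)) (fun k => hynmem (ns k))
    refine ⟨ms, ?_⟩
    have hcyinf : c yinf = U g := by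
      have h1 : Tendsto (fun k => c (yn (ns (ms k)))) atTop (𝓝 (c yinf)) :=
        (hccont.tendsto yinf).comp hms
      have h2 : Tendsto (fun k => c (yn (ns (ms k)))) atTop (𝓝 (U g)) := by
        have : Tendsto (fun k => ns (ms k)) atTop atTop :=
          hns.comp hms_mono.tendsto_atTop
        simpa only [Function.comp_def, hyn] using hUt.comp this
      exact tendsto_nhds_unique h1 h2
    have : Tendsto (fun k => φ (yn (ns (ms k)))) atTop (𝓝 (φ yinf)) :=
      (hcont.tendsto yinf).comp hms
    rwa [hφeq yinf y (by rw [hcyinf, hy])] at this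
  · -- U-order preserving on bounded measurable functions
    intro g₁ g₂ hg₁ hg₂
    obtain ⟨x₁, hx₁⟩ := hexB g₁ hg₁
    obtain ⟨x₂, hx₂⟩ := hexB g₂ hg₂
    rw [hΦval g₁ x₁ hx₁, hΦval g₂ x₂ hx₂, hiff x₁ x₂, hx₁, hx₂]
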